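/- Pythagorean decomposition for UGA: if a★ = α★(p,π) is the unbounded general adjuster output for Bregman divergence d_φ, then for any q ∈ Q_π, (1/n)Σ_i [d_φ(p_{i·}, q_{i·}) − d_φ(a★_{i·}, q_{i·})] = (1/n)Σ_i d_φ(p_{i·}, a★_{i·}). In particular, taking q = y the true labels, the loss after adjustment decomposes: average loss of p equals average loss of a★ plus (1/n)Σ_i d_φ(p_{i·}, a★_{i·}) ≥ 0. -/

import Mathlib

/-- Bregman divergence of `φ` with gradient map `g`. -/
noncomputable def bregman {k : ℕ} (φ : (Fin k → ℝ) → ℝ) (g : (Fin k → ℝ) → Fin k → ℝ)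
    (p q : Fin k → ℝ) : ℝ :=
  φ q - φ p - ∑ j, (q j - p j) * g p j

/-- The set `Q_π` of adjusted prediction matrices: rows sum to 1, column means equal `π`. -/
def Qpi (n k : ℕ) (π : Fin k → ℝ) : Set (Fin n → Fin k → ℝ) :=
  {a | (∀ i, ∑ j, a i j = 1) ∧ (∀ j, (1 / (n : ℝ)) * ∑ i, a i j = π j)}

/-- Convexity plus a gradient implies the Bregman divergence is nonnegative. -/
lemma bregman_nonneg {k : ℕ} (φ : (Fin k → ℝ) → ℝ) (g : (Fin k → ℝ) → Fin k → ℝ)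
    (hφ : ConvexOn ℝ Set.univ φ)
    (hg : ∀ x, HasGradientAt (fun y : EuclideanSpace ℝ (Fin k) => φ ((WithLp.equiv 2 (Fin k → ℝ)) y))
      ((WithLp.equiv 2 (Fin k → ℝ)).symm (g x)) ((WithLp.equiv 2 (Fin k → ℝ)).symm x))
    (x y : Fin k → ℝ) : 0 ≤ bregman φ g x y := by
  classical
  set X : EuclideanSpace ℝ (Fin k) := (WithLp.equiv 2 (Fin k → ℝ)).symm x with hX
  set Y : EuclideanSpace ℝ (Fin k) := (WithLp.equiv 2 (Fin k → ℝ)).symm y with hY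
  set G : EuclideanSpace ℝ (Fin k) := (WithLp.equiv 2 (Fin k → ℝ)).symm (g x) with hG
  have hF : HasFDerivAt (fun v : EuclideanSpace ℝ (Fin k) => φ ((WithLp.equiv 2 (Fin k → ℝ)) v))
      ((InnerProductSpace.toDual ℝ (EuclideanSpace ℝ (Fin k))) G) X := (hg x).hasFDerivAt
  -- the line from X to Y
  have h1 := (hasDerivAt_id (0 : ℝ)).smul_const (Y - X)
  rw [one_smul] at h1
  have hline : HasDerivAt (fun t : ℝ => X + t • (Y - X)) (Y - X) 0 := by
    have h2 := h1.const_add X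
    simpa [Function.comp] using h2
  have hF' : HasFDerivAt (fun v : EuclideanSpace ℝ (Fin k) => φ ((WithLp.equiv 2 (Fin k → ℝ)) v))
      ((InnerProductSpace.toDual ℝ (EuclideanSpace ℝ (Fin k))) G) (X + (0:ℝ) • (Y - X)) := by
    rw [zero_smul, add_zero]; exact hF
  have hψ : HasDerivAt (fun t : ℝ => φ ((WithLp.equiv 2 (Fin k → ℝ)) (X + t • (Y - X))))
      ((InnerProductSpace.toDual ℝ (EuclideanSpace ℝ (Fin k))) G (Y - X)) 0 :=
    by have h3 := hF'.comp_hasDerivAt 0 hline; exact h3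
  -- identify the composed function with the affine line in the plain pi type
  have hpt : ∀ t : ℝ, (WithLp.equiv 2 (Fin k → ℝ)) (X + t • (Y - X)) = x + t • (y - x) := by
    intro t
    rw [hX, hY]
    simp
  -- convexity of the restriction to the line
  have hconv : ConvexOn ℝ Set.univ
      (fun t : ℝ => φ ((WithLp.equiv 2 (Fin k → ℝ)) (X + t • (Y - X)))) := by
    have h := hφ.comp_affineMap (AffineMap.lineMap x y)
    have heq : (fun t : ℝ => φ ((WithLp.equiv 2 (Fin k → ℝ)) (X + t • (Y - X))))
        = φ ∘ (AffineMap.lineMap x y) := by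
      funext t
      rw [hpt t]
      simp only [Function.comp_apply, AffineMap.lineMap_apply_module]
      congr 1
      module
    rw [heq]
    simpa using h
  have hle := hconv.le_slope_of_hasDerivAt (Set.mem_univ (0 : ℝ)) (Set.mem_univ (1 : ℝ))
    one_pos hψ
  have hslope : slope (fun t : ℝ => φ ((WithLp.equiv 2 (Fin k → ℝ)) (X + t • (Y - X)))) 0 1
      = φ y - φ x := by
    rw [slope_def_field, hpt 1, hpt 0]
    norm_num
  have hval : (InnerProductSpace.toDual ℝ (EuclideanSpace ℝ (Fin k))) G (Y - X)
      = ∑ j, (y j - x j) * g x j := by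
    rw [InnerProductSpace.toDual_apply_apply, PiLp.inner_apply]
    refine Finset.sum_congr rfl fun j _ => ?_
    have hGj : G j = g x j := rfl
    have hYXj : (Y - X) j = y j - x j := rfl
    rw [RCLike.inner_apply, conj_trivial, hGj, hYXj, mul_comm]
  rw [hslope, hval] at hle
  unfold bregman
  linarith

/-- Three-point identity for the Bregman divergence. -/
lemma bregman_three_point {k : ℕ} (φ : (Fin k → ℝ) → ℝ) (g : (Fin k → ℝ) → Fin k → ℝ)
    (p a q : Fin k → ℝ) :
    bregman φ g p q - bregman φ g a q
      = bregman φ g p a + ∑ j, (q j - a j) * (g a j - g p j) := by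
  unfold bregman
  have h : ∑ j, (q j - a j) * (g a j - g p j)
      = (∑ j, (q j - a j) * g a j) - (∑ j, (q j - p j) * g p j)
        + (∑ j, (a j - p j) * g p j) := by
    rw [← Finset.sum_sub_distrib, ← Finset.sum_add_distrib]
    exact Finset.sum_congr rfl fun j _ => by ring
  rw [h]; ring

/-- Pythagorean decomposition for UGA: with `a★` the UGA output (satisfying the
Lagrange stationarity conditions on `Q_π`), for any `q ∈ Q_π`,
`(1/n)Σ_i [d_φ(p_i,q_i) − d_φ(a★_i,q_i)] = (1/n)Σ_i d_φ(p_i,a★_i)`; in particular the average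
loss of `p` equals the average loss of `a★` plus the nonnegative term `(1/n)Σ_i d_φ(p_i,a★_i)`. -/
theorem uga_pythagorean_decomposition {n k : ℕ} (hn : 0 < n)
    (φ : (Fin k → ℝ) → ℝ) (g : (Fin k → ℝ) → Fin k → ℝ)
    (hφ : ConvexOn ℝ Set.univ φ)
    (hg : ∀ x, HasGradientAt (fun y : EuclideanSpace ℝ (Fin k) => φ ((WithLp.equiv 2 (Fin k → ℝ)) y))
      ((WithLp.equiv 2 (Fin k → ℝ)).symm (g x)) ((WithLp.equiv 2 (Fin k → ℝ)).symm x))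
    (p astar : Fin n → Fin k → ℝ) (π : Fin k → ℝ)
    (ha : astar ∈ Qpi n k π)
    (θ : Fin n → ℝ) (lam : Fin k → ℝ)
    (hstat : ∀ i j, g (astar i) j - g (p i) j = -θ i - lam j) :
    ∀ q ∈ Qpi n k π,
      ((1 / n) * ∑ i, (bregman φ g (p i) (q i) - bregman φ g (astar i) (q i))
          = (1 / n) * ∑ i, bregman φ g (p i) (astar i))
        ∧ ((1 / n) * ∑ i, bregman φ g (p i) (q i)
            = (1 / n) * ∑ i, bregman φ g (astar i) (q i)
              + (1 / n) * ∑ i, bregman φ g (p i) (astar i))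
        ∧ 0 ≤ (1 / n) * ∑ i, bregman φ g (p i) (astar i) := by
  intro q hq
  obtain ⟨haRow, haCol⟩ := ha
  obtain ⟨hqRow, hqCol⟩ := hq
  have hnR : (0 : ℝ) < n := by exact_mod_cast hn
  -- column sums agree
  have hcol : ∀ j, ∑ i, q i j = ∑ i, astar i j := by
    intro j
    have h1 := hqCol j
    have h2 := haCol j
    have h3 : (1 / (n : ℝ)) * ∑ i, q i j = (1 / (n : ℝ)) * ∑ i, astar i j := by
      rw [h1, h2]
    exact mul_left_cancel₀ (by positivity) h3
  -- the cross term vanishes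
  have hcross : ∑ i, ∑ j, (q i j - astar i j) * (g (astar i) j - g (p i) j) = 0 := by
    have hsplit : ∀ i, ∑ j, (q i j - astar i j) * (g (astar i) j - g (p i) j)
        = (-θ i) * ((∑ j, q i j) - ∑ j, astar i j)
          + ∑ j, (-lam j) * (q i j - astar i j) := by
      intro i
      have hθ : (-θ i) * ((∑ j, q i j) - ∑ j, astar i j)
          = ∑ j, (-θ i) * (q i j - astar i j) := by
        rw [← Finset.sum_sub_distrib, Finset.mul_sum]
      rw [hθ, ← Finset.sum_add_distrib]
      refine Finset.sum_congr rfl fun j _ => ?_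
      rw [hstat i j]; ring
    calc ∑ i, ∑ j, (q i j - astar i j) * (g (astar i) j - g (p i) j)
        = ∑ i, ((-θ i) * ((∑ j, q i j) - ∑ j, astar i j)
            + ∑ j, (-lam j) * (q i j - astar i j)) :=
          Finset.sum_congr rfl fun i _ => hsplit i
      _ = ∑ i, ∑ j, (-lam j) * (q i j - astar i j) := by
          refine Finset.sum_congr rfl fun i _ => ?_
          rw [hqRow i, haRow i]; ring
      _ = ∑ j, (-lam j) * ((∑ i, q i j) - ∑ i, astar i j) := by
          rw [Finset.sum_comm]
          refine Finset.sum_congr rfl fun j _ => ?_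
          rw [← Finset.sum_sub_distrib, Finset.mul_sum]
      _ = 0 := by
          refine Finset.sum_eq_zero fun j _ => ?_
          rw [hcol j]; ring
  -- main identity
  have hmain : ∑ i, (bregman φ g (p i) (q i) - bregman φ g (astar i) (q i))
      = ∑ i, bregman φ g (p i) (astar i) := by
    have h : ∑ i, (bregman φ g (p i) (q i) - bregman φ g (astar i) (q i))
        = ∑ i, (bregman φ g (p i) (astar i)
            + ∑ j, (q i j - astar i j) * (g (astar i) j - g (p i) j)) :=
      Finset.sum_congr rfl fun i _ => bregman_three_point φ g (p i) (astar i) (q i)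
    rw [h, Finset.sum_add_distrib, hcross, add_zero]
  have hnonneg : 0 ≤ (1 / (n : ℝ)) * ∑ i, bregman φ g (p i) (astar i) := by
    apply mul_nonneg (by positivity)
    exact Finset.sum_nonneg fun i _ => bregman_nonneg φ g hφ hg (p i) (astar i)
  refine ⟨by rw [hmain], ?_, hnonneg⟩
  have := congrArg (fun x => (1 / (n : ℝ)) * x) hmain
  simp only [Finset.sum_sub_distrib, mul_sub] at this
  linarith
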